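/- Let $V$ be the set of functions $f: \mathbb{Z}^2 \to \mathbb{Z}((q^{1/2}))$ satisfying both recursions $q^{e/2} f(m+1,e) + q^{-m/2} f(m,e+1) = f(m,e)$ and $q^{e/2} f(m-1,e) + q^{-m/2} f(m,e-1) = f(m,e)$ for all integers $m,e$. Define $(Sf)(m,e) = (-q^{1/2})^{-e} f(e,-e-m)$. If $f \in V$ then $Sf \in V$. -/

import Mathlib

lemma single_neg' (a : ℤ) (r : ℤ) :
    (HahnSeries.single a (-r) : LaurentSeries ℤ) = - HahnSeries.single a r := by
  ext n
  simp only [HahnSeries.coeff_single, HahnSeries.coeff_neg]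
  split <;> simp

lemma eps_succ (e : ℤ) : ((-1:ℤ))^(e+1).natAbs = -(-1:ℤ)^e.natAbs := by
  rcases Int.even_or_odd e with he | he
  · rw [(Int.natAbs_even.mpr he).neg_one_pow,
      (Int.natAbs_odd.mpr (Even.add_one he)).neg_one_pow]
  · rw [(Int.natAbs_odd.mpr he).neg_one_pow,
      (Int.natAbs_even.mpr (Odd.add_one he)).neg_one_pow]
    ring

lemma eps_pred (e : ℤ) : ((-1:ℤ))^(e-1).natAbs = -(-1:ℤ)^e.natAbs := by
  have := eps_succ (e - 1)
  rw [sub_add_cancel] at this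
  rw [this]; ring

/- Elements of `ℤ((q^{1/2}))` are Laurent series in the variable `t = q^{1/2}`,
i.e. elements of `LaurentSeries ℤ`.  The monomial `q^{a/2} = t^a` is
`HahnSeries.single a 1`, and `(-q^{1/2})^{-e} = (-1)^e q^{-e/2}` is
`HahnSeries.single (-e) ((-1)^e.natAbs)`. -/

/-- The operator `(Sf)(m,e) = (-q^{1/2})^{-e} f(e, -e-m)`. -/
noncomputable def Sop (f : ℤ → ℤ → LaurentSeries ℤ) : ℤ → ℤ → LaurentSeries ℤ :=
  fun m e => HahnSeries.single (-e) ((-1 : ℤ) ^ e.natAbs) * f e (-e - m)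

/-- If `f` satisfies both basic recursions of a tetrahedron index
(i.e. `f ∈ V`), then so does `Sf`. -/
theorem Sop_mem_V (f : ℤ → ℤ → LaurentSeries ℤ)
    (h1 : ∀ m e : ℤ, HahnSeries.single e (1 : ℤ) * f (m + 1) e +
      HahnSeries.single (-m) (1 : ℤ) * f m (e + 1) = f m e)
    (h2 : ∀ m e : ℤ, HahnSeries.single e (1 : ℤ) * f (m - 1) e +
      HahnSeries.single (-m) (1 : ℤ) * f m (e - 1) = f m e) :
    (∀ m e : ℤ, HahnSeries.single e (1 : ℤ) * Sop f (m + 1) e +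
      HahnSeries.single (-m) (1 : ℤ) * Sop f m (e + 1) = Sop f m e) ∧
    (∀ m e : ℤ, HahnSeries.single e (1 : ℤ) * Sop f (m - 1) e +
      HahnSeries.single (-m) (1 : ℤ) * Sop f m (e - 1) = Sop f m e) := by
  constructor
  · intro m e
    simp only [Sop]
    have key := h1 e (-e - m - 1)
    rw [show -e - m - 1 + 1 = -e - m by ring] at key
    rw [show -e - (m+1) = -e - m - 1 by ring, show -(e+1) - m = -e - m - 1 by ring,
      eps_succ e, single_neg', ← key]
    have q1 : HahnSeries.single e (1:ℤ) * HahnSeries.single (-e) ((-1:ℤ)^e.natAbs) *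
        HahnSeries.single (-e - m - 1) (1:ℤ) =
        HahnSeries.single (-m) (1:ℤ) * HahnSeries.single (-(e+1)) ((-1:ℤ)^e.natAbs) := by
      rw [HahnSeries.single_mul_single, HahnSeries.single_mul_single,
        HahnSeries.single_mul_single]
      congr 1 <;> ring
    have q2 : HahnSeries.single e (1:ℤ) * HahnSeries.single (-e) ((-1:ℤ)^e.natAbs) *
        HahnSeries.single (-e) (1:ℤ) = HahnSeries.single (-e) ((-1:ℤ)^e.natAbs) := by
      rw [HahnSeries.single_mul_single, HahnSeries.single_mul_single]
      congr 1 <;> ring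
    linear_combination f (e+1) (-e - m - 1) * q1 + f e (-e - m) * q2
  · intro m e
    simp only [Sop]
    have key := h2 e (-e - m + 1)
    rw [show -e - m + 1 - 1 = -e - m by ring] at key
    rw [show -e - (m-1) = -e - m + 1 by ring, show -(e-1) - m = -e - m + 1 by ring,
      eps_pred e, single_neg', ← key]
    have q1 : HahnSeries.single e (1:ℤ) * HahnSeries.single (-e) ((-1:ℤ)^e.natAbs) *
        HahnSeries.single (-e - m + 1) (1:ℤ) =
        HahnSeries.single (-m) (1:ℤ) * HahnSeries.single (-(e-1)) ((-1:ℤ)^e.natAbs) := by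
      rw [HahnSeries.single_mul_single, HahnSeries.single_mul_single,
        HahnSeries.single_mul_single]
      congr 1 <;> ring
    have q2 : HahnSeries.single e (1:ℤ) * HahnSeries.single (-e) ((-1:ℤ)^e.natAbs) *
        HahnSeries.single (-e) (1:ℤ) = HahnSeries.single (-e) ((-1:ℤ)^e.natAbs) := by
      rw [HahnSeries.single_mul_single, HahnSeries.single_mul_single]
      congr 1 <;> ring
    linear_combination f (e-1) (-e - m + 1) * q1 + f e (-e - m) * q2
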